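/- Let x, z be vertices of DL_d(q) with h_i(z) = 0 for all i, and suppose m_i(z) ≠ m_i(x) for every i with m_i(x) ≠ 0. Set c_i = max{0, m_i(z) − m_i(x)}. Then d(x,z) ≥ d(x,id) + Σ_{i=1}^d c_i. -/
import Mathlib


open Finset

/-- A vertex of the oriented (q+1)-valent tree `T` underlying Diestel–Leader graphs:
descend `m` edges from the basepoint `o` along its ancestor ray (whose edges all
carry the label `0`), then ascend along the edge labels listed in `w`.
The normalization condition (if `m ≠ 0`, the first label of `w` is not `0`)
makes this representation unique. -/
structure TreeVertex (q : ℕ) where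
  m : ℕ
  w : List (Fin q)
  norm : ∀ a t, m ≠ 0 → w = a :: t → (a : ℕ) ≠ 0

namespace TreeVertex

variable {q : ℕ}

/-- the basepoint `o` of the tree -/
def o (q : ℕ) : TreeVertex q := ⟨0, [], fun _ _ h _ => absurd rfl h⟩

/-- `l v = d(v, o ⋏ v)` -/
def l (v : TreeVertex q) : ℕ := v.w.length

/-- the height function `h = l - m` -/
def h (v : TreeVertex q) : ℤ := (v.l : ℤ) - (v.m : ℤ)

/-- length of the longest common prefix of two lists -/
def cpl : List (Fin q) → List (Fin q) → ℕ
  | a :: s, b :: t => if a = b then cpl s t + 1 else 0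
  | _, _ => 0

/-- `mPair x y = d(x, x ⋏ y)`, the distance from `x` to the greatest common
ancestor of `x` and `y`. -/
def mPair (x y : TreeVertex q) : ℕ :=
  if x.m < y.m then x.l + (y.m - x.m)
  else if y.m < x.m then x.l
  else x.l - cpl x.w y.w

/-- the graph distance in the tree -/
def dist (x y : TreeVertex q) : ℕ := mPair x y + mPair y x

end TreeVertex

/-- The Diestel–Leader graph `DL_d(q)`: `d`-tuples of tree vertices whose heights
sum to `0`. -/
structure DL (d q : ℕ) where
  t : Fin d → TreeVertex q
  hsum : ∑ i, (t i).h = 0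

namespace DL

variable {d q : ℕ}

/-- the basepoint `id` of `DL_d(q)` -/
def id0 (d q : ℕ) : DL d q :=
  ⟨fun _ => TreeVertex.o q, by simp [TreeVertex.h, TreeVertex.o, TreeVertex.l]⟩

/-- the pairwise coordinate `m_i(x,y) = d_i(p_i x, p_i x ⋏ p_i y)` -/
def mm (x y : DL d q) (i : Fin d) : ℕ := TreeVertex.mPair (x.t i) (y.t i)

/-- the pairwise coordinate `l_i(x,y) = d_i(p_i y, p_i x ⋏ p_i y)` -/
def ll (x y : DL d q) (i : Fin d) : ℕ := TreeVertex.mPair (y.t i) (x.t i)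

/-- the coordinate `m_i(x)` -/
def mc (x : DL d q) (i : Fin d) : ℕ := (x.t i).m

/-- the coordinate `l_i(x)` -/
def lc (x : DL d q) (i : Fin d) : ℕ := (x.t i).l

/-- the height coordinate `h_i(x) = l_i(x) - m_i(x)` -/
def hc (x : DL d q) (i : Fin d) : ℤ := (x.t i).h

/-- The Stein–Taback quantity `f_{σ,i}` (here `i` is 1-based, `2 ≤ i ≤ d`):
`f_{σ,i} = m_{σ(1)} + ⋯ + m_{σ(i)} + l_{σ(i)} + ⋯ + l_{σ(d)}` for `2 ≤ i ≤ d-1`,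
and `f_{σ,d} = 2m_{σ(1)} + m_{σ(2)} + ⋯ + m_{σ(d)} + l_{σ(d)}`. -/
def fST {d : ℕ} (m l : Fin d → ℕ) (σ : Equiv.Perm (Fin d)) (i : ℕ) : ℕ :=
  if i = d then
    (∑ j, m (σ j)) + (∑ j ∈ univ.filter fun j : Fin d => (j : ℕ) = 0, m (σ j))
      + (∑ j ∈ univ.filter fun j : Fin d => (j : ℕ) = d - 1, l (σ j))
  else
    (∑ j ∈ univ.filter fun j : Fin d => (j : ℕ) + 1 ≤ i, m (σ j))
      + (∑ j ∈ univ.filter fun j : Fin d => i ≤ (j : ℕ) + 1, l (σ j))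

/-- The distance on `DL_d(q)`, via the Stein–Taback formula
`d(x,y) = min_{σ ∈ Σ_d} max_{2 ≤ i ≤ d} f_{σ,i}(x,y)`. -/
noncomputable def dist (x y : DL d q) : ℕ :=
  ⨅ σ : Equiv.Perm (Fin d), ⨆ i ∈ Finset.Icc 2 d, fST (mm x y) (ll x y) σ i

end DL


section Aux

variable {d q : ℕ}

lemma cpl_nil_right (w : List (Fin q)) : TreeVertex.cpl w ([] : List (Fin q)) = 0 := by
  cases w <;> rfl

lemma cpl_nil_left (w : List (Fin q)) : TreeVertex.cpl ([] : List (Fin q)) w = 0 := by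
  cases w <;> rfl

lemma mm_id (x : DL d q) (i : Fin d) : DL.mm x (DL.id0 d q) i = DL.lc x i := by
  simp only [DL.mm, DL.id0, DL.lc, TreeVertex.mPair, TreeVertex.o]
  split_ifs <;> simp_all [TreeVertex.l, cpl_nil_right]

lemma ll_id (x : DL d q) (i : Fin d) : DL.ll x (DL.id0 d q) i = DL.mc x i := by
  simp only [DL.ll, DL.id0, DL.mc, TreeVertex.mPair, TreeVertex.o]
  split_ifs with h1 h2 <;> simp_all [TreeVertex.l, cpl_nil_left]

lemma coord_mm (x z : DL d q) (hz : ∀ i, DL.hc z i = 0)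
    (hne : ∀ i, DL.mc x i ≠ 0 → DL.mc z i ≠ DL.mc x i) (i : Fin d) :
    DL.mm x (DL.id0 d q) i + (DL.mc z i - DL.mc x i) ≤ DL.mm x z i := by
  have hzl : (z.t i).l = (z.t i).m := by
    have := hz i; simp [DL.hc, TreeVertex.h] at this; omega
  rw [mm_id]
  simp only [DL.mm, DL.mc, DL.lc, TreeVertex.mPair]
  split_ifs with h1 h2
  · omega
  · omega
  · -- m equal
    have hmx : (x.t i).m = 0 := by
      by_contra h
      exact hne i h (by simp [DL.mc]; omega)
    have hmz : (z.t i).m = 0 := by omega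
    have : (z.t i).w = [] := by
      have : (z.t i).w.length = 0 := by
        have := hzl; simp [TreeVertex.l] at this; omega
      exact List.length_eq_zero_iff.mp this
    rw [this, cpl_nil_right]
    omega

lemma coord_ll (x z : DL d q) (hz : ∀ i, DL.hc z i = 0)
    (hne : ∀ i, DL.mc x i ≠ 0 → DL.mc z i ≠ DL.mc x i) (i : Fin d) :
    DL.ll x (DL.id0 d q) i + (DL.mc z i - DL.mc x i) ≤ DL.ll x z i := by
  have hzl : (z.t i).l = (z.t i).m := by
    have := hz i; simp [DL.hc, TreeVertex.h] at this; omega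
  rw [ll_id]
  simp only [DL.ll, DL.mc, TreeVertex.mPair]
  split_ifs with h1 h2
  · omega
  · omega
  · have hmx : (x.t i).m = 0 := by
      by_contra h
      exact hne i h (by simp [DL.mc]; omega)
    omega

lemma fST_add {d : ℕ} (m l m' l' c : Fin d → ℕ)
    (hm : ∀ j, m j + c j ≤ m' j) (hl : ∀ j, l j + c j ≤ l' j)
    (σ : Equiv.Perm (Fin d)) (i : ℕ) :
    DL.fST m l σ i + ∑ j, c j ≤ DL.fST m' l' σ i := by
  have hcsum : (∑ j, c j) = ∑ j, c (σ j) := (Equiv.sum_comp σ c).symm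
  unfold DL.fST
  split_ifs with h
  · have h1 : (∑ j, m (σ j)) + ∑ j, c (σ j) ≤ ∑ j, m' (σ j) := by
      rw [← Finset.sum_add_distrib]
      exact Finset.sum_le_sum fun j _ => hm (σ j)
    have h2 : (∑ j ∈ univ.filter fun j : Fin d => (j : ℕ) = 0, m (σ j))
        ≤ ∑ j ∈ univ.filter fun j : Fin d => (j : ℕ) = 0, m' (σ j) :=
      Finset.sum_le_sum fun j _ => le_trans (Nat.le_add_right _ _) (hm (σ j))
    have h3 : (∑ j ∈ univ.filter fun j : Fin d => (j : ℕ) = d - 1, l (σ j))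
        ≤ ∑ j ∈ univ.filter fun j : Fin d => (j : ℕ) = d - 1, l' (σ j) :=
      Finset.sum_le_sum fun j _ => le_trans (Nat.le_add_right _ _) (hl (σ j))
    omega
  · have hsplit : (∑ j, c (σ j))
        = (∑ j ∈ univ.filter fun j : Fin d => (j : ℕ) + 1 ≤ i, c (σ j))
          + ∑ j ∈ univ.filter fun j : Fin d => ¬ ((j : ℕ) + 1 ≤ i), c (σ j) :=
      (Finset.sum_filter_add_sum_filter_not univ _ _).symm
    have hsub : (univ.filter fun j : Fin d => ¬ ((j : ℕ) + 1 ≤ i))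
        ⊆ univ.filter fun j : Fin d => i ≤ (j : ℕ) + 1 := by
      intro j hj
      simp only [Finset.mem_filter, Finset.mem_univ, true_and] at hj ⊢
      omega
    have h1 : (∑ j ∈ univ.filter fun j : Fin d => (j : ℕ) + 1 ≤ i, m (σ j))
        + (∑ j ∈ univ.filter fun j : Fin d => (j : ℕ) + 1 ≤ i, c (σ j))
        ≤ ∑ j ∈ univ.filter fun j : Fin d => (j : ℕ) + 1 ≤ i, m' (σ j) := by
      rw [← Finset.sum_add_distrib]
      exact Finset.sum_le_sum fun j _ => hm (σ j)
    have h2 : (∑ j ∈ univ.filter fun j : Fin d => i ≤ (j : ℕ) + 1, l (σ j))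
        + (∑ j ∈ univ.filter fun j : Fin d => ¬ ((j : ℕ) + 1 ≤ i), c (σ j))
        ≤ ∑ j ∈ univ.filter fun j : Fin d => i ≤ (j : ℕ) + 1, l' (σ j) := by
      calc _ ≤ (∑ j ∈ univ.filter fun j : Fin d => i ≤ (j : ℕ) + 1, l (σ j))
            + (∑ j ∈ univ.filter fun j : Fin d => i ≤ (j : ℕ) + 1, c (σ j)) := by
              exact Nat.add_le_add_left (Finset.sum_le_sum_of_subset hsub) _
        _ ≤ _ := by
              rw [← Finset.sum_add_distrib]
              exact Finset.sum_le_sum fun j _ => hl (σ j)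
    omega

lemma natBiSup (s : Finset ℕ) (g : ℕ → ℕ) : (⨆ i ∈ s, g i) = s.sup g := by
  have hb : ∀ i : ℕ, (⨆ _ : i ∈ s, g i) ≤ s.sup g := by
    intro i
    by_cases h : i ∈ s
    · have : (⨆ _ : i ∈ s, g i) = g i := by
        haveI : Nonempty (i ∈ s) := ⟨h⟩
        exact ciSup_const
      rw [this]; exact Finset.le_sup h
    · have : (⨆ _ : i ∈ s, g i) = ⊥ := by
        haveI : IsEmpty (i ∈ s) := ⟨h⟩
        exact ciSup_of_empty _
      rw [this]; exact bot_le
  apply le_antisymm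
  · exact ciSup_le hb
  · apply Finset.sup_le
    intro i hi
    have h1 : g i = ⨆ _ : i ∈ s, g i := by
      haveI : Nonempty (i ∈ s) := ⟨hi⟩
      exact ciSup_const.symm
    rw [h1]
    exact le_ciSup ⟨s.sup g, by rintro v ⟨i, rfl⟩; exact hb i⟩ i

lemma sup_add_le (s : Finset ℕ) (hs : s.Nonempty) (g g' : ℕ → ℕ) (C : ℕ)
    (h : ∀ i ∈ s, g i + C ≤ g' i) : s.sup g + C ≤ s.sup g' := by
  obtain ⟨i₀, hi₀, hgi₀⟩ := Finset.exists_mem_eq_sup s hs g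
  rw [hgi₀]
  exact le_trans (h i₀ hi₀) (Finset.le_sup hi₀)

end Aux

/-- Let `x, z` be vertices of `DL_d(q)` with `h_i(z) = 0` for
all `i`, and suppose `m_i(z) ≠ m_i(x)` for every `i` with `m_i(x) ≠ 0`.  Set
`c_i = max {0, m_i(z) - m_i(x)}` (here realized by truncated subtraction).
Then `d(x,z) ≥ d(x, id) + Σ_i c_i`. -/
theorem dist_ge_dist_id_add {d q : ℕ} (hd : 2 ≤ d) (x z : DL d q)
    (hz : ∀ i, DL.hc z i = 0)
    (hne : ∀ i, DL.mc x i ≠ 0 → DL.mc z i ≠ DL.mc x i) :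
    DL.dist x (DL.id0 d q) + ∑ i, (DL.mc z i - DL.mc x i) ≤ DL.dist x z := by
  set c : Fin d → ℕ := fun i => DL.mc z i - DL.mc x i with hc
  unfold DL.dist
  apply le_ciInf
  intro σ
  have h1 : (⨅ σ : Equiv.Perm (Fin d),
      ⨆ i ∈ Finset.Icc 2 d, DL.fST (DL.mm x (DL.id0 d q)) (DL.ll x (DL.id0 d q)) σ i)
      ≤ ⨆ i ∈ Finset.Icc 2 d, DL.fST (DL.mm x (DL.id0 d q)) (DL.ll x (DL.id0 d q)) σ i :=
    ciInf_le (OrderBot.bddBelow _) σ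
  refine le_trans (Nat.add_le_add_right h1 _) ?_
  rw [natBiSup, natBiSup]
  apply _root_.sup_add_le
  · exact ⟨2, by simp [Finset.mem_Icc]; omega⟩
  · intro i _
    exact fST_add _ _ _ _ c (coord_mm x z hz hne) (coord_ll x z hz hne) σ i
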